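/- Let a, b, x, y be positive integers with ab = n, x > 1, y > 1, and suppose ax ≡ 1 (mod y) and by ≡ 1 (mod x). Define the positive integer k by ax + by − 1 = kxy. Then max(x, y) ≤ (2n − 1)/(2k − 1). -/

import Mathlib

lemma key_max_xy (a b x y k : ℤ) (ha : 1 ≤ a) (hb : 1 ≤ b) (hx : 2 ≤ x) (hy : 2 ≤ y)
    (hk : 1 ≤ k) (hk' : a * x + b * y = k * x * y + 1) (hxy : y ≤ x) :
    (2 * k - 1) * x ≤ 2 * (a * b) - 1 := by
  set d : ℤ := k * y - a with hd
  have hdx : d * x = b * y - 1 := by rw [hd]; nlinarith [hk']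
  have hd1 : 1 ≤ d := by nlinarith [hdx]
  have hdb : d ≤ b - 1 := by nlinarith [hk']
  have hky : 2 * k ≤ k * y := by nlinarith
  have hkd : 0 < k * d := by positivity
  rw [← mul_le_mul_iff_right₀ hkd]
  have h1 : k * d * ((2*k-1)*x) = (2*k-1)*(b*(a+d) - k) := by
    have : k * (d * x) = k * (b*y - 1) := by rw [hdx]
    nlinarith [this]
  rw [h1]
  rcases le_or_gt d (2*k - 1) with hcase | hcase
  · nlinarith [mul_nonneg (mul_nonneg (by linarith : (0:ℤ) ≤ b) (by nlinarith : (0:ℤ) ≤ 2*k*d - 2*k + 1)) (by linarith : (0:ℤ) ≤ a - (2*k - d)), mul_nonneg (mul_nonneg (by linarith : (0:ℤ) ≤ k) (by linarith : (0:ℤ) ≤ 2*k-1-d)) (by nlinarith : (0:ℤ) ≤ 2*b*(d-1)+1)]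
  · nlinarith [mul_nonneg (mul_nonneg (by linarith : (0:ℤ) ≤ b) (by nlinarith : (0:ℤ) ≤ 2*k*d - 2*k + 1)) (by linarith : (0:ℤ) ≤ a - 1), mul_nonneg (by linarith : (0:ℤ) ≤ d - 2*k + 1) (by nlinarith : (0:ℤ) ≤ b - k)]

/-- With `a, b, x, y` positive integers, `ab = n`, `x, y > 1`,
`ax ≡ 1 (mod y)`, `by ≡ 1 (mod x)`, and the positive integer `k` defined by
`ax + by - 1 = kxy`, we have `max(x, y) ≤ (2n - 1)/(2k - 1)`. -/
theorem max_xy_bound (n a b x y k : ℕ)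
    (ha : 0 < a) (hb : 0 < b) (hab : a * b = n)
    (hx : 1 < x) (hy : 1 < y)
    (hax : a * x ≡ 1 [MOD y]) (hby : b * y ≡ 1 [MOD x])
    (hk : 0 < k)
    (hk' : a * x + b * y = k * x * y + 1) :
    (max x y : ℝ) ≤ (2 * (n : ℝ) - 1) / (2 * (k : ℝ) - 1) := by
  have hk1 : (1:ℕ) ≤ k := hk
  have hkR : (0:ℝ) < 2 * (k:ℝ) - 1 := by
    have : (1:ℝ) ≤ (k:ℝ) := by exact_mod_cast hk1
    linarith
  rw [le_div_iff₀ hkR]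
  have hZk' : (a:ℤ) * x + (b:ℤ) * y = (k:ℤ) * x * y + 1 := by exact_mod_cast hk'
  have hZ : (2 * (k:ℤ) - 1) * (max x y : ℕ) ≤ 2 * ((a:ℤ) * b) - 1 := by
    rcases le_total y x with h | h
    · rw [max_eq_left h]
      exact key_max_xy a b x y k (by exact_mod_cast ha) (by exact_mod_cast hb)
        (by exact_mod_cast hx) (by exact_mod_cast hy) (by exact_mod_cast hk1)
        hZk' (by exact_mod_cast h)
    · rw [max_eq_right h]
      have := key_max_xy b a y x k (by exact_mod_cast hb) (by exact_mod_cast ha)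
        (by exact_mod_cast hy) (by exact_mod_cast hx) (by exact_mod_cast hk1)
        (by linarith [hZk']) (by exact_mod_cast h)
      linarith [this]
  have hn : (n:ℤ) = (a:ℤ) * b := by exact_mod_cast hab.symm
  have hZ' : (max x y : ℕ) * (2 * (k:ℤ) - 1) ≤ 2 * (n:ℤ) - 1 := by
    rw [hn]; linarith
  exact_mod_cast hZ'
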